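/- (Woodbury identity for restricted resolvents.) Let A ∈ ℝ^{n×n} be symmetric, Q ∈ ℝ^{n×d}, C ∈ ℝ^{d×d} symmetric, and set A' = A + Q·C·Qᵀ. Let z ∈ ℝ be such that both zI − A and zI − A' are invertible, and define K = Qᵀ·(zI − A)⁻¹·Q and K' = Qᵀ·(zI − A')⁻¹·Q. Then I − K·C is invertible and K' = K + K·C·(I − K·C)⁻¹·K. -/
import Mathlib


open Matrix

/-- Woodbury identity for restricted resolvents: with `A` symmetric,
`A' = A + Q·C·Qᵀ`, `K = Qᵀ·(zI − A)⁻¹·Q` and `K' = Qᵀ·(zI − A')⁻¹·Q`,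
the matrix `I − K·C` is invertible and `K' = K + K·C·(I − K·C)⁻¹·K`. -/
theorem woodbury_restricted_resolvent_identity {n d : ℕ}
    (A : Matrix (Fin n) (Fin n) ℝ) (hA : A.IsSymm)
    (Q : Matrix (Fin n) (Fin d) ℝ)
    (C : Matrix (Fin d) (Fin d) ℝ) (hC : C.IsSymm)
    (z : ℝ)
    (hG : IsUnit (z • (1 : Matrix (Fin n) (Fin n) ℝ) - A))
    (hG' : IsUnit (z • (1 : Matrix (Fin n) (Fin n) ℝ) - (A + Q * C * Qᵀ))) :
    IsUnit ((1 : Matrix (Fin d) (Fin d) ℝ) -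
        (Qᵀ * (z • (1 : Matrix (Fin n) (Fin n) ℝ) - A)⁻¹ * Q) * C) ∧
    Qᵀ * (z • (1 : Matrix (Fin n) (Fin n) ℝ) - (A + Q * C * Qᵀ))⁻¹ * Q =
      Qᵀ * (z • (1 : Matrix (Fin n) (Fin n) ℝ) - A)⁻¹ * Q +
        (Qᵀ * (z • (1 : Matrix (Fin n) (Fin n) ℝ) - A)⁻¹ * Q) * C *
          ((1 : Matrix (Fin d) (Fin d) ℝ) -
            (Qᵀ * (z • (1 : Matrix (Fin n) (Fin n) ℝ) - A)⁻¹ * Q) * C)⁻¹ *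
          (Qᵀ * (z • (1 : Matrix (Fin n) (Fin n) ℝ) - A)⁻¹ * Q) := by
  set G := z • (1 : Matrix (Fin n) (Fin n) ℝ) - A with hGdef
  have hsub : z • (1 : Matrix (Fin n) (Fin n) ℝ) - (A + Q * C * Qᵀ) = G - Q * C * Qᵀ := by
    rw [hGdef, sub_add_eq_sub_sub]
  rw [hsub] at hG' ⊢
  have hGdet : IsUnit G.det := (Matrix.isUnit_iff_isUnit_det _).1 hG
  have hGG : G * G⁻¹ = 1 := Matrix.mul_nonsing_inv _ hGdet
  have hfact : G - Q * C * Qᵀ = G * (1 - G⁻¹ * Q * (C * Qᵀ)) := by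
    rw [Matrix.mul_sub, Matrix.mul_one]
    congr 1
    simp only [Matrix.mul_assoc, Matrix.mul_nonsing_inv_cancel_left (h := hGdet)]
  have hG'det : IsUnit (G - Q * C * Qᵀ).det := (Matrix.isUnit_iff_isUnit_det _).1 hG'
  have hdet1 : IsUnit (1 - G⁻¹ * Q * (C * Qᵀ)).det := by
    rw [hfact, Matrix.det_mul] at hG'det
    exact (IsUnit.mul_iff.mp hG'det).2
  have hKCdet : IsUnit ((1 : Matrix (Fin d) (Fin d) ℝ) - Qᵀ * G⁻¹ * Q * C).det := by
    rw [Matrix.det_one_sub_mul_comm]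
    have h2 : C * (Qᵀ * G⁻¹ * Q) = C * Qᵀ * (G⁻¹ * Q) := by
      simp only [Matrix.mul_assoc]
    rw [h2, Matrix.det_one_sub_mul_comm]
    exact hdet1
  have hunit : IsUnit ((1 : Matrix (Fin d) (Fin d) ℝ) - Qᵀ * G⁻¹ * Q * C) :=
    (Matrix.isUnit_iff_isUnit_det _).2 hKCdet
  refine ⟨hunit, ?_⟩
  set D := ((1 : Matrix (Fin d) (Fin d) ℝ) - Qᵀ * G⁻¹ * Q * C)⁻¹ with hD
  have hDD : ((1 : Matrix (Fin d) (Fin d) ℝ) - Qᵀ * G⁻¹ * Q * C) * D = 1 :=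
    Matrix.mul_nonsing_inv _ hKCdet
  have hKCD : Qᵀ * G⁻¹ * Q * C * D = D - 1 := by
    rw [Matrix.sub_mul, Matrix.one_mul] at hDD
    calc Qᵀ * G⁻¹ * Q * C * D
        = D - (D - Qᵀ * G⁻¹ * Q * C * D) := by abel
      _ = D - 1 := by rw [hDD]
  have hKCD2 : Qᵀ * (G⁻¹ * (Q * (C * (D * (Qᵀ * G⁻¹))))) =
      D * (Qᵀ * G⁻¹) - Qᵀ * (G⁻¹) := by
    have h := congrArg (fun M => M * (Qᵀ * G⁻¹)) hKCD
    simp only [Matrix.mul_assoc, Matrix.sub_mul, Matrix.one_mul] at h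
    exact h
  have hinv : (G - Q * C * Qᵀ)⁻¹ = G⁻¹ + G⁻¹ * Q * C * D * (Qᵀ * G⁻¹) := by
    apply Matrix.inv_eq_right_inv
    simp only [Matrix.sub_mul, Matrix.mul_add, Matrix.mul_sub, Matrix.add_mul,
      Matrix.mul_assoc, hGG, Matrix.mul_nonsing_inv_cancel_left (h := hGdet), hKCD2]
    abel
  rw [hinv]
  simp only [Matrix.mul_add, Matrix.add_mul, Matrix.mul_assoc]
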